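/- If n ≥ 2 and a league outcome with n teams is tied with common score 3n−4, then every team has exactly n−2 victories, 2 draws, and n−2 defeats among its 2(n−1) matches. -/

import Mathlib

open Finset

inductive MatchResult : Type
  | homeWin : MatchResult
  | draw : MatchResult
  | awayWin : MatchResult
  deriving DecidableEq

instance instFintypeMatchResult : Fintype MatchResult where
  elems := {MatchResult.homeWin, MatchResult.draw, MatchResult.awayWin}
  complete := by intro x; cases x <;> simp

/-- A league outcome: a result for each ordered pair of distinct teams
(the first component is the home team). -/
abbrev LeagueOutcome (n : ℕ) : Type :=
  {p : Fin n × Fin n // p.1 ≠ p.2} → MatchResult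

/-- Points earned by the home team. -/
def homePts : MatchResult → ℕ
  | .homeWin => 3
  | .draw => 1
  | .awayWin => 0

/-- Points earned by the away team. -/
def awayPts : MatchResult → ℕ
  | .homeWin => 0
  | .draw => 1
  | .awayWin => 3

/-- Total points of team `i`: sum over all matches of the points `i` earns in them. -/
def totalPoints {n : ℕ} (r : LeagueOutcome n) (i : Fin n) : ℕ :=
  ∑ m : {p : Fin n × Fin n // p.1 ≠ p.2},
    ((if m.val.1 = i then homePts (r m) else 0) +
     (if m.val.2 = i then awayPts (r m) else 0))

/-- Total points the other teams earn in their matches against team `i`. -/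
def oppPoints {n : ℕ} (r : LeagueOutcome n) (i : Fin n) : ℕ :=
  ∑ m : {p : Fin n × Fin n // p.1 ≠ p.2},
    ((if m.val.1 = i then awayPts (r m) else 0) +
     (if m.val.2 = i then homePts (r m) else 0))

/-- Number of matches that team `i` wins. -/
def wins {n : ℕ} (r : LeagueOutcome n) (i : Fin n) : ℕ :=
  (Finset.univ.filter (fun m : {p : Fin n × Fin n // p.1 ≠ p.2} =>
    (m.val.1 = i ∧ r m = .homeWin) ∨ (m.val.2 = i ∧ r m = .awayWin))).card

/-- Number of matches that team `i` draws. -/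
def draws {n : ℕ} (r : LeagueOutcome n) (i : Fin n) : ℕ :=
  (Finset.univ.filter (fun m : {p : Fin n × Fin n // p.1 ≠ p.2} =>
    (m.val.1 = i ∨ m.val.2 = i) ∧ r m = .draw)).card

/-- Number of matches that team `i` loses. -/
def losses {n : ℕ} (r : LeagueOutcome n) (i : Fin n) : ℕ :=
  (Finset.univ.filter (fun m : {p : Fin n × Fin n // p.1 ≠ p.2} =>
    (m.val.1 = i ∧ r m = .awayWin) ∨ (m.val.2 = i ∧ r m = .homeWin))).card


abbrev MT (n : ℕ) := {p : Fin n × Fin n // p.1 ≠ p.2}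

lemma card_fst {n : ℕ} (i : Fin n) :
    (univ.filter (fun m : MT n => m.val.1 = i)).card = n - 1 := by
  have : (univ.filter (fun m : MT n => m.val.1 = i)).card
      = ((univ : Finset (Fin n)).erase i).card := by
    refine Finset.card_bij' (fun (m : MT n) _ => m.val.2)
        (fun j hj => (⟨(i, j), fun h => (Finset.mem_erase.mp hj).1 h.symm⟩ : MT n))
        ?_ ?_ ?_ ?_
    · intro m hm
      simp only [mem_filter, mem_univ, true_and] at hm
      exact Finset.mem_erase.mpr ⟨fun h => m.prop (hm.trans h.symm), mem_univ _⟩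
    · intro j _; simp
    · intro m hm
      simp only [mem_filter, mem_univ, true_and] at hm
      exact Subtype.ext (Prod.ext hm.symm rfl)
    · intro j hj; rfl
  rw [this, Finset.card_erase_of_mem (mem_univ i), card_univ, Fintype.card_fin]

lemma card_snd {n : ℕ} (i : Fin n) :
    (univ.filter (fun m : MT n => m.val.2 = i)).card = n - 1 := by
  have : (univ.filter (fun m : MT n => m.val.2 = i)).card
      = ((univ : Finset (Fin n)).erase i).card := by
    refine Finset.card_bij' (fun (m : MT n) _ => m.val.1)
        (fun j hj => (⟨(j, i), fun h => (Finset.mem_erase.mp hj).1 h⟩ : MT n))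
        ?_ ?_ ?_ ?_
    · intro m hm
      simp only [mem_filter, mem_univ, true_and] at hm
      exact Finset.mem_erase.mpr ⟨fun h => m.prop (h.trans hm.symm), mem_univ _⟩
    · intro j _; simp
    · intro m hm
      simp only [mem_filter, mem_univ, true_and] at hm
      exact Subtype.ext (Prod.ext rfl hm.symm)
    · intro j hj; rfl
  rw [this, Finset.card_erase_of_mem (mem_univ i), card_univ, Fintype.card_fin]

lemma card_inv {n : ℕ} (i : Fin n) :
    (univ.filter (fun m : MT n => m.val.1 = i ∨ m.val.2 = i)).card = 2 * (n - 1) := by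
  rw [Finset.filter_or, Finset.card_union_of_disjoint, card_fst, card_snd]
  · ring
  · rw [Finset.disjoint_left]
    intro m hm1 hm2
    simp only [mem_filter, mem_univ, true_and] at hm1 hm2
    exact m.prop (hm1.trans hm2.symm)

lemma total_eq {n : ℕ} (r : LeagueOutcome n) (i : Fin n) :
    totalPoints r i = 3 * wins r i + draws r i := by
  rw [totalPoints, wins, draws, Finset.card_filter, Finset.card_filter, Finset.mul_sum,
    ← Finset.sum_add_distrib]
  refine Finset.sum_congr rfl fun m _ => ?_
  obtain ⟨⟨a, b⟩, hab⟩ := m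
  rcases hx : r ⟨(a, b), hab⟩ <;> by_cases h1 : a = i <;> by_cases h2 : b = i <;>
    first
      | exact absurd (h1.trans h2.symm) hab
      | simp_all [homePts, awayPts]

lemma wdl_eq {n : ℕ} (r : LeagueOutcome n) (i : Fin n) :
    wins r i + draws r i + losses r i = 2 * (n - 1) := by
  rw [← card_inv i, wins, draws, losses, Finset.card_filter, Finset.card_filter,
    Finset.card_filter, Finset.card_filter, ← Finset.sum_add_distrib,
    ← Finset.sum_add_distrib]
  refine Finset.sum_congr rfl fun m _ => ?_
  obtain ⟨⟨a, b⟩, hab⟩ := m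
  rcases hx : r ⟨(a, b), hab⟩ <;> by_cases h1 : a = i <;> by_cases h2 : b = i <;>
    first
      | exact absurd (h1.trans h2.symm) hab
      | simp_all [homePts, awayPts]

lemma key_eq {n : ℕ} (r : LeagueOutcome n) (i : Fin n) :
    totalPoints r i + oppPoints r i + draws r i = 6 * (n - 1) := by
  have h3 : (6 : ℕ) * (n - 1) = 3 * (2 * (n - 1)) := by ring
  rw [totalPoints, oppPoints, draws, Finset.card_filter, ← Finset.sum_add_distrib,
    ← Finset.sum_add_distrib, h3, ← card_inv i, Finset.card_filter, Finset.mul_sum]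
  refine Finset.sum_congr rfl fun m _ => ?_
  obtain ⟨⟨a, b⟩, hab⟩ := m
  rcases hx : r ⟨(a, b), hab⟩ <;> by_cases h1 : a = i <;> by_cases h2 : b = i <;>
    first
      | exact absurd (h1.trans h2.symm) hab
      | simp_all [homePts, awayPts]

lemma sum_opp {n : ℕ} (r : LeagueOutcome n) :
    ∑ i, oppPoints r i = ∑ i, totalPoints r i := by
  unfold oppPoints totalPoints
  rw [Finset.sum_comm]
  conv_rhs => rw [Finset.sum_comm]
  refine Finset.sum_congr rfl fun m _ => ?_
  rw [Finset.sum_add_distrib, Finset.sum_add_distrib, Finset.sum_ite_eq,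
    Finset.sum_ite_eq, Finset.sum_ite_eq, Finset.sum_ite_eq]
  simp [Nat.add_comm]

/-- in a league tied with common score `3n−4`, every team has exactly
`n−2` victories, 2 draws and `n−2` defeats. -/
theorem tied_three_n_sub_four (n : ℕ) (hn : 2 ≤ n) (r : LeagueOutcome n)
    (h : ∀ i, totalPoints r i = 3 * n - 4) :
    ∀ i, wins r i = n - 2 ∧ draws r i = 2 ∧ losses r i = n - 2 := by
  have htw : ∀ i, 3 * wins r i + draws r i = 3 * n - 4 := fun i =>
    (total_eq r i).symm.trans (h i)
  have hdge : ∀ i, 2 ≤ draws r i := fun i => by have := htw i; omega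
  have hsum : ∑ i, draws r i = 2 * n := by
    have h1 : ∑ i : Fin n, (totalPoints r i + oppPoints r i + draws r i) = n * (6 * (n - 1)) := by
      rw [Finset.sum_congr rfl (fun i _ => key_eq r i), Finset.sum_const, card_univ,
        Fintype.card_fin, smul_eq_mul]
    rw [Finset.sum_add_distrib, Finset.sum_add_distrib, sum_opp] at h1
    have h2 : ∑ i, totalPoints r i = n * (3 * n - 4) := by
      rw [Finset.sum_congr rfl (fun i _ => h i), Finset.sum_const, card_univ,
        Fintype.card_fin, smul_eq_mul]
    rw [h2] at h1
    obtain ⟨k, rfl⟩ : ∃ k, n = k + 2 := ⟨n - 2, by omega⟩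
    have e1 : 3 * (k + 2) - 4 = 3 * k + 2 := by omega
    have e2 : (k + 2) - 1 = k + 1 := by omega
    rw [e1, e2] at h1
    have e3 : (k + 2) * (6 * (k + 1)) = (k + 2) * (3 * k + 2) + (k + 2) * (3 * k + 2)
        + 2 * (k + 2) := by ring
    rw [e3] at h1
    omega
  have hz : ∑ i : Fin n, (draws r i - 2) = 0 := by
    have h4 : ∑ i, draws r i = ∑ i : Fin n, (2 + (draws r i - 2)) :=
      Finset.sum_congr rfl fun i _ => by have := hdge i; omega
    rw [hsum, Finset.sum_add_distrib, Finset.sum_const, card_univ, Fintype.card_fin,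
      smul_eq_mul] at h4
    omega
  have hd : ∀ i, draws r i = 2 := fun i => by
    have := Finset.sum_eq_zero_iff.mp hz i (mem_univ i)
    have := hdge i
    omega
  intro i
  have h5 := htw i
  have h6 := wdl_eq r i
  have h7 := hd i
  refine ⟨by omega, h7, by omega⟩
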